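/- Let X be a real Banach space, let A ⊆ X be a nonempty, closed, convex and bounded set, and let f : X → ℝ ∪ {+∞} be a proper lower semicontinuous function. If a ∈ dom f satisfies f(a) ≤ inf_{x∈A} f(x), then there exists x̄ in the multidirectional interval [a,A] such that f(x̄) ≤ f(a) and f⁻(x̄; A − a) ≥ 0. -/

import Mathlib

open Filter Set Topology

/-- The multidirectional interval `[a, A] = {a + t • (x - a) : t ∈ [0,1], x ∈ A}`. -/
def mdInterval {X : Type*} [AddCommGroup X] [Module ℝ X] (a : X) (A : Set X) : Set X :=
  {y | ∃ t ∈ Set.Icc (0 : ℝ) 1, ∃ x ∈ A, y = a + t • (x - a)}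

/-- The `A`-directional derivative
`f⁻(x; A) = liminf_{t ↓ 0} (inf f(x + t A) - f x) / t`, with values in `EReal`. -/
noncomputable def mdDeriv {Y : Type*} [NormedAddCommGroup Y] [NormedSpace ℝ Y]
    (f : Y → EReal) (x : Y) (A : Set Y) : EReal :=
  Filter.liminf
    (fun t : ℝ => ((t⁻¹ : ℝ) : EReal) * (sInf (f '' ((fun v => x + t • v) '' A)) - f x))
    (nhdsWithin 0 (Set.Ioi 0))

/-- The descent relation used in the Zorn argument: `p ≼ q` iff `p = q` or
`q` is reached from `p` by moving in a direction of `A - a` with budget increase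
`q.1 - p.1 > 0`, staying within budget `1`, and strictly decreasing `f`. -/
def prRel {X : Type*} [AddCommGroup X] [Module ℝ X]
    (f : X → EReal) (a : X) (A : Set X) (p q : ℝ × X) : Prop :=
  p = q ∨ (p.1 < q.1 ∧ q.1 ≤ 1 ∧ (∃ v ∈ A, q.2 - p.2 = (q.1 - p.1) • (v - a)) ∧ f q.2 < f p.2)

lemma prRel_trans {X : Type*} [AddCommGroup X] [Module ℝ X]
    {f : X → EReal} {a : X} {A : Set X} (hAconv : Convex ℝ A)
    {p q s : ℝ × X} (h1 : prRel f a A p q) (h2 : prRel f a A q s) : prRel f a A p s := by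
  rcases h1 with rfl | ⟨hb1, hle1, ⟨v, hv, hvx⟩, hf1⟩
  · exact h2
  rcases h2 with rfl | ⟨hb2, hle2, ⟨w, hw, hwx⟩, hf2⟩
  · exact Or.inr ⟨hb1, hle1, ⟨v, hv, hvx⟩, hf1⟩
  refine Or.inr ⟨hb1.trans hb2, hle2, ?_, hf2.trans hf1⟩
  have hsp : (0:ℝ) < s.1 - p.1 := by linarith
  set c1 : ℝ := (q.1 - p.1) / (s.1 - p.1) with hc1def
  set c2 : ℝ := (s.1 - q.1) / (s.1 - p.1) with hc2def
  have hc1 : 0 ≤ c1 := div_nonneg (by linarith) hsp.le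
  have hc2 : 0 ≤ c2 := div_nonneg (by linarith) hsp.le
  have hc12 : c1 + c2 = 1 := by
    rw [hc1def, hc2def, ← add_div, div_eq_one_iff_eq hsp.ne']
    ring
  refine ⟨c1 • v + c2 • w, hAconv hv hw hc1 hc2 hc12, ?_⟩
  have hsum : s.2 - p.2 = (q.1 - p.1) • (v - a) + (s.1 - q.1) • (w - a) := by
    rw [← hvx, ← hwx]; abel
  have h1' : (q.1 - p.1) = (s.1 - p.1) * c1 := by
    rw [hc1def]; field_simp
  have h2' : (s.1 - q.1) = (s.1 - p.1) * c2 := by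
    rw [hc2def]; field_simp
  rw [hsum, h1', h2', mul_smul, mul_smul, ← smul_add]
  congr 1
  have haa : c1 • a + c2 • a = a := by rw [← add_smul, hc12, one_smul]
  calc c1 • (v - a) + c2 • (w - a) = c1 • v + c2 • w - (c1 • a + c2 • a) := by
        rw [smul_sub, smul_sub]; abel
    _ = c1 • v + c2 • w - a := by rw [haa]

lemma prRel_norm {X : Type*} [NormedAddCommGroup X] [NormedSpace ℝ X]
    {f : X → EReal} {a : X} {A : Set X} {K : ℝ}
    (hK : ∀ v ∈ A, ‖v - a‖ ≤ K)
    {p q : ℝ × X} (h : prRel f a A p q) :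
    p.1 ≤ q.1 ∧ ‖q.2 - p.2‖ ≤ (q.1 - p.1) * K := by
  rcases h with rfl | ⟨hb, _, ⟨v, hv, hvx⟩, _⟩
  · simp
  · refine ⟨hb.le, ?_⟩
    rw [hvx, norm_smul, Real.norm_eq_abs, abs_of_nonneg (by linarith : (0:ℝ) ≤ q.1 - p.1)]
    exact mul_le_mul_of_nonneg_left (hK v hv) (by linarith)

/-- Chains for the descent relation are bounded above. -/
lemma prRel_chain_ub {X : Type*} [NormedAddCommGroup X] [NormedSpace ℝ X] [CompleteSpace X]
    (A : Set X) (hA : A.Nonempty) (hAcl : IsClosed A) (hAbd : Bornology.IsBounded A)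
    (f : X → EReal) (hf : LowerSemicontinuous f) (a : X)
    (c : Set (ℝ × X)) (hc : IsChain (prRel f a A) c) (hne : c.Nonempty)
    (hcD : ∀ p ∈ c, prRel f a A (0, a) p) :
    ∃ ub, ∀ p ∈ c, prRel f a A p ub := by
  -- bound on directions
  obtain ⟨C, hC⟩ := isBounded_iff_forall_norm_le.1 hAbd
  set K : ℝ := C + ‖a‖ with hKdef
  have hK : ∀ v ∈ A, ‖v - a‖ ≤ K := fun v hv =>
    (norm_sub_le _ _).trans (by have := hC v hv; rw [hKdef]; linarith)
  obtain ⟨v₀, hv₀⟩ := hA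
  have hK0 : 0 ≤ K := le_trans (norm_nonneg _) (hK v₀ hv₀)
  -- first coordinates lie in [0,1]
  have hb01 : ∀ p ∈ c, 0 ≤ p.1 ∧ p.1 ≤ 1 := by
    intro p hp
    rcases hcD p hp with heq | ⟨h0, h1, _, _⟩
    · rw [← heq]; norm_num
    · exact ⟨le_of_lt h0, h1⟩
  set T : Set ℝ := Prod.fst '' c with hTdef
  have hTne : T.Nonempty := hne.image _
  have hTbdd : BddAbove T := by
    refine ⟨1, ?_⟩
    rintro b ⟨p, hp, rfl⟩
    exact (hb01 p hp).2
  set bs : ℝ := sSup T with hbsdef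
  have hble : ∀ p ∈ c, p.1 ≤ bs := fun p hp => le_csSup hTbdd ⟨p, hp, rfl⟩
  have hbs1 : bs ≤ 1 := csSup_le hTne (by rintro b ⟨p, hp, rfl⟩; exact (hb01 p hp).2)
  by_cases hattain : ∃ p ∈ c, p.1 = bs
  · obtain ⟨p, hp, hpb⟩ := hattain
    refine ⟨p, fun q hq => ?_⟩
    by_cases hqp : q = p
    · exact Or.inl hqp
    · rcases hc hq hp hqp with h | h
      · exact h
      · rcases h with heq | ⟨hlt, _, _, _⟩
        · exact absurd heq.symm hqp
        · exact absurd hlt (not_lt.2 (hpb ▸ hble q hq))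
  · push_neg at hattain
    have hlt : ∀ p ∈ c, p.1 < bs := fun p hp => lt_of_le_of_ne (hble p hp) (hattain p hp)
    -- select a sequence approaching the sup
    have hsel : ∀ n : ℕ, ∃ p ∈ c, bs - 1 / ((n : ℝ) + 1) < p.1 := by
      intro n
      have hpos : (0:ℝ) < 1 / ((n : ℝ) + 1) := by positivity
      obtain ⟨b, hb, hlt'⟩ := exists_lt_of_lt_csSup hTne (by linarith : bs - 1/((n:ℝ)+1) < bs)
      obtain ⟨p, hp, rfl⟩ := hb
      exact ⟨p, hp, hlt'⟩
    choose P hPc hPb using hsel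
    have hPle : ∀ n, (P n).1 ≤ bs := fun n => hble _ (hPc n)
    -- equal first coordinates force equal elements
    have hsame : ∀ m n : ℕ, (P m).1 = (P n).1 → P m = P n := by
      intro m n h
      by_contra hne'
      rcases hc (hPc m) (hPc n) hne' with h' | h' <;>
        rcases h' with heq | ⟨hlt', _, _, _⟩
      · exact hne' heq
      · exact absurd h (ne_of_lt hlt')
      · exact hne' heq.symm
      · exact absurd h.symm (ne_of_lt hlt')
    have hcomp : ∀ m n : ℕ, (P m).1 < (P n).1 →
        (P m).1 < (P n).1 ∧ (P n).1 ≤ 1 ∧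
        (∃ v ∈ A, (P n).2 - (P m).2 = ((P n).1 - (P m).1) • (v - a)) ∧ f (P n).2 < f (P m).2 := by
      intro m n h
      have hne' : P m ≠ P n := fun e => absurd (congrArg Prod.fst e) (ne_of_lt h)
      rcases hc (hPc m) (hPc n) hne' with h' | h'
      · rcases h' with heq | hs
        · exact absurd heq hne'
        · exact hs
      · rcases h' with heq | ⟨hlt', _, _, _⟩
        · exact absurd heq.symm hne'
        · exact absurd hlt' (not_lt.2 h.le)
    -- the second coordinates form a Cauchy sequence
    have hdistb : ∀ n m N : ℕ, N ≤ n → N ≤ m →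
        dist (P n).2 (P m).2 ≤ K * (1 / ((N : ℝ) + 1)) := by
      intro n m N hNn hNm
      have hfrac : ∀ k : ℕ, N ≤ k → bs - 1 / ((N : ℝ) + 1) < (P k).1 := by
        intro k hk
        have h1 : 1 / ((k : ℝ) + 1) ≤ 1 / ((N : ℝ) + 1) := by
          apply one_div_le_one_div_of_le (by positivity)
          exact_mod_cast by omega
        have := hPb k
        linarith
      rcases lt_trichotomy (P n).1 (P m).1 with h | h | h
      · obtain ⟨_, _, ⟨v, hv, hvx⟩, _⟩ := hcomp n m h
        rw [dist_comm, dist_eq_norm, hvx, norm_smul, Real.norm_eq_abs,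
          abs_of_nonneg (by linarith : (0:ℝ) ≤ (P m).1 - (P n).1)]
        have h1 := hfrac n hNn
        have h2 := hPle m
        have : (P m).1 - (P n).1 ≤ 1 / ((N : ℝ) + 1) := by linarith
        calc ((P m).1 - (P n).1) * ‖v - a‖ ≤ ((P m).1 - (P n).1) * K :=
              mul_le_mul_of_nonneg_left (hK v hv) (by linarith)
          _ ≤ (1 / ((N : ℝ) + 1)) * K := mul_le_mul_of_nonneg_right this hK0
          _ = K * (1 / ((N : ℝ) + 1)) := mul_comm _ _
      · rw [hsame n m h]
        simp
        positivity
      · obtain ⟨_, _, ⟨v, hv, hvx⟩, _⟩ := hcomp m n h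
        rw [dist_eq_norm, hvx, norm_smul, Real.norm_eq_abs,
          abs_of_nonneg (by linarith : (0:ℝ) ≤ (P n).1 - (P m).1)]
        have h1 := hfrac m hNm
        have h2 := hPle n
        have : (P n).1 - (P m).1 ≤ 1 / ((N : ℝ) + 1) := by linarith
        calc ((P n).1 - (P m).1) * ‖v - a‖ ≤ ((P n).1 - (P m).1) * K :=
              mul_le_mul_of_nonneg_left (hK v hv) (by linarith)
          _ ≤ (1 / ((N : ℝ) + 1)) * K := mul_le_mul_of_nonneg_right this hK0
          _ = K * (1 / ((N : ℝ) + 1)) := mul_comm _ _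
    have hcauchy : CauchySeq (fun n => (P n).2) :=
      cauchySeq_of_le_tendsto_0 (fun N : ℕ => K * (1 / ((N : ℝ) + 1))) hdistb
        (by simpa using tendsto_one_div_add_atTop_nhds_zero_nat.const_mul K)
    obtain ⟨xs, hxs⟩ := cauchySeq_tendsto_of_complete hcauchy
    have hbtend : Tendsto (fun n => (P n).1) atTop (𝓝 bs) := by
      apply tendsto_of_tendsto_of_tendsto_of_le_of_le
        (g := fun n : ℕ => bs - 1 / ((n : ℝ) + 1)) (h := fun _ : ℕ => bs)
      · have := tendsto_one_div_add_atTop_nhds_zero_nat.const_sub bs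
        simpa using this
      · exact tendsto_const_nhds
      · exact fun n => (hPb n).le
      · exact hPle
    refine ⟨(bs, xs), fun p hp => ?_⟩
    have hpb : p.1 < bs := hlt p hp
    -- eventually the sequence passes p
    have hevp : ∀ᶠ n in atTop, p.1 < (P n).1 := (tendsto_order.1 hbtend).1 p.1 hpb
    obtain ⟨N1, hN1⟩ := eventually_atTop.1 hevp
    have hrelp : ∀ n : ℕ, p.1 < (P n).1 →
        (∃ v ∈ A, (P n).2 - p.2 = ((P n).1 - p.1) • (v - a)) ∧ f (P n).2 < f p.2 := by
      intro n h
      have hne' : p ≠ P n := fun e => absurd (congrArg Prod.fst e) (ne_of_lt h)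
      rcases hc hp (hPc n) hne' with h' | h'
      · rcases h' with heq | ⟨_, _, hw, hfl⟩
        · exact absurd heq hne'
        · exact ⟨hw, hfl⟩
      · rcases h' with heq | ⟨hlt', _, _, _⟩
        · exact absurd heq.symm hne'
        · exact absurd hlt' (not_lt.2 h.le)
    -- the direction witness for the limit
    have hbne : bs - p.1 ≠ 0 := ne_of_gt (by linarith)
    set w : ℕ → X := fun n => a + ((P n).1 - p.1)⁻¹ • ((P n).2 - p.2) with hwdef
    have hwA : ∀ n ≥ N1, w n ∈ A := by
      intro n hn
      obtain ⟨⟨v, hv, hvx⟩, _⟩ := hrelp n (hN1 n hn)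
      have hne0 : (P n).1 - p.1 ≠ 0 := ne_of_gt (by have := hN1 n hn; linarith)
      rw [hwdef]
      simp only
      rw [hvx, inv_smul_smul₀ hne0, add_sub_cancel]
      exact hv
    have hwt : Tendsto w atTop (𝓝 (a + (bs - p.1)⁻¹ • (xs - p.2))) := by
      apply tendsto_const_nhds.add
      exact Tendsto.smul ((hbtend.sub_const p.1).inv₀ hbne) (hxs.sub_const p.2)
    set v : X := a + (bs - p.1)⁻¹ • (xs - p.2) with hvdef
    have hvA : v ∈ A := hAcl.mem_of_tendsto hwt (eventually_atTop.2 ⟨N1, hwA⟩)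
    have hvx : xs - p.2 = (bs - p.1) • (v - a) := by
      rw [hvdef, add_sub_cancel_left, smul_inv_smul₀ hbne]
    -- the f-value strictly decreases at the limit
    have hflt : f xs < f p.2 := by
      have h1 : p.1 < (P N1).1 := hN1 N1 le_rfl
      have h2 : (P N1).1 < bs := hlt _ (hPc N1)
      have hev2 : ∀ᶠ n in atTop, (P N1).1 < (P n).1 := (tendsto_order.1 hbtend).1 _ h2
      obtain ⟨N2, hN2⟩ := eventually_atTop.1 hev2
      have hfl2 : f (P N2).2 < f p.2 := by
        have hc1 := (hcomp N1 N2 (hN2 N2 le_rfl)).2.2.2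
        have hc2 := (hrelp N1 h1).2
        exact hc1.trans hc2
      have hflim : f xs ≤ f (P N2).2 := by
        by_contra hgt
        push_neg at hgt
        have hev3 : ∀ᶠ z in 𝓝 xs, f (P N2).2 < f z := hf xs _ hgt
        have hev4 : ∀ᶠ n in atTop, f (P N2).2 < f (P n).2 := hxs.eventually hev3
        have h3 : (P N2).1 < bs := hlt _ (hPc N2)
        have hev5 : ∀ᶠ n in atTop, (P N2).1 < (P n).1 := (tendsto_order.1 hbtend).1 _ h3
        have hev6 : ∀ᶠ n in atTop, f (P n).2 < f (P N2).2 := by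
          filter_upwards [hev5] with n hn
          exact (hcomp N2 n hn).2.2.2
        obtain ⟨n, h4, h5⟩ := (hev4.and hev6).exists
        exact absurd h5 (not_lt.2 h4.le)
      exact lt_of_le_of_lt hflim hfl2
    exact Or.inr ⟨hpb, hbs1, ⟨v, hvA, hvx⟩, hflt⟩

theorem primal_rolle
    {X : Type*} [NormedAddCommGroup X] [NormedSpace ℝ X] [CompleteSpace X]
    (A : Set X) (hA : A.Nonempty) (hAcl : IsClosed A) (hAconv : Convex ℝ A)
    (hAbd : Bornology.IsBounded A)
    (f : X → EReal) (hf : LowerSemicontinuous f) (hfbot : ∀ x, f x ≠ ⊥)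
    (hproper : ∃ x, f x ≠ ⊤)
    (a : X) (ha : f a ≠ ⊤) (hfa : ∀ x ∈ A, f a ≤ f x) :
    ∃ xbar ∈ mdInterval a A,
      f xbar ≤ f a ∧ 0 ≤ mdDeriv f xbar ((fun x => x - a) '' A) := by
  classical
  set R := prRel f a A with hRdef
  -- Zorn's lemma on the subtype of points reachable from (0, a)
  obtain ⟨m, hm⟩ :=
    exists_maximal_of_chains_bounded
      (r := fun p q : {p : ℝ × X // R (0, a) p} => R p.1 q.1)
      (fun c hc => by
        rcases c.eq_empty_or_nonempty with rfl | hcne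
        · exact ⟨⟨(0, a), Or.inl rfl⟩, by simp⟩
        · have hc' : IsChain R (Subtype.val '' c) := by
            intro p hp q hq hpq
            obtain ⟨p', hp', rfl⟩ := hp
            obtain ⟨q', hq', rfl⟩ := hq
            have hne'' : p' ≠ q' := fun e => hpq (congrArg Subtype.val e)
            exact hc hp' hq' hne''
          have hne' : (Subtype.val '' c).Nonempty := hcne.image _
          have hcD : ∀ p ∈ Subtype.val '' c, R (0, a) p := by
            rintro p ⟨q, _, rfl⟩; exact q.2
          obtain ⟨ub, hub⟩ := prRel_chain_ub A hA hAcl hAbd f hf a _ hc' hne' hcD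
          obtain ⟨p0, hp0⟩ := hcne
          have hubD : R (0, a) ub :=
            prRel_trans hAconv p0.2 (hub p0.1 ⟨p0, hp0, rfl⟩)
          exact ⟨⟨ub, hubD⟩, fun q hq => hub q.1 ⟨q, hq, rfl⟩⟩)
      (fun {p q s} h1 h2 => prRel_trans hAconv h1 h2)
  obtain ⟨⟨bb, xb⟩, hbase⟩ := m
  -- basic facts about the maximal element
  have hfle : f xb ≤ f a := by
    rcases hbase with heq | ⟨_, _, _, hlt⟩
    · injection heq with h1 h2
      rw [← h2]
    · exact hlt.le
  have hble : bb ≤ 1 := by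
    rcases hbase with heq | ⟨_, h1, _, _⟩
    · injection heq with h1 h2
      rw [← h1]; norm_num
    · exact h1
  have hbge : 0 ≤ bb := by
    rcases hbase with heq | ⟨h0, _, _, _⟩
    · injection heq with h1 h2
      rw [← h1]
    · exact h0.le
  have hmem : xb ∈ mdInterval a A := by
    rcases hbase with heq | ⟨_, _, ⟨v, hv, hvx⟩, _⟩
    · obtain ⟨x0, hx0⟩ := hA
      refine ⟨0, ⟨le_rfl, zero_le_one⟩, x0, hx0, ?_⟩
      injection heq with h1 h2
      rw [← h2]; simp
    · refine ⟨bb, ⟨hbge, hble⟩, v, hv, ?_⟩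
      simp only at hvx
      rw [sub_zero] at hvx
      rw [← hvx]
      abel
  have hbne1 : bb ≠ 1 := by
    intro h1
    rcases hbase with heq | ⟨_, _, ⟨v, hv, hvx⟩, hlt⟩
    · injection heq with hb0 hxa
      rw [h1] at hb0; norm_num at hb0
    · simp only at hvx
      rw [h1, sub_zero, one_smul] at hvx
      have hxv : xb = v := sub_left_inj.1 hvx
      rw [hxv] at hlt
      exact absurd (hfa v hv) (not_le.2 hlt)
  have hblt1 : bb < 1 := lt_of_le_of_ne hble hbne1
  refine ⟨xb, hmem, hfle, ?_⟩
  by_contra hneg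
  have hfx_ne_top : f xb ≠ ⊤ := fun h => ha (top_le_iff.1 (h ▸ hfle))
  obtain ⟨r, hr⟩ : ∃ r : ℝ, f xb = (r : EReal) :=
    ⟨(f xb).toReal, (EReal.coe_toReal hfx_ne_top (hfbot xb)).symm⟩
  -- find a strictly decreasing step
  have key : ∃ t : ℝ, 0 < t ∧ t < 1 - bb ∧
      sInf (f '' ((fun v => xb + t • v) '' ((fun x => x - a) '' A))) < f xb := by
    by_contra hno
    push_neg at hno
    apply hneg
    rw [mdDeriv, Filter.liminf_eq]
    apply le_sSup
    have hmem' : Ioo (0:ℝ) (1 - bb) ∈ nhdsWithin (0:ℝ) (Set.Ioi 0) :=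
      Ioo_mem_nhdsGT_of_mem ⟨le_rfl, by linarith⟩
    show ∀ᶠ t in nhdsWithin (0:ℝ) (Set.Ioi 0),
      (0 : EReal) ≤ ((t⁻¹ : ℝ) : EReal) *
        (sInf (f '' ((fun v => xb + t • v) '' ((fun x => x - a) '' A))) - f xb)
    filter_upwards [hmem'] with t ht
    have hS := hno t ht.1 ht.2
    have h1 : (0:EReal) ≤ ((t⁻¹ : ℝ) : EReal) := by
      exact_mod_cast inv_nonneg.2 ht.1.le
    have h2 : (0:EReal) ≤
        sInf (f '' ((fun v => xb + t • v) '' ((fun x => x - a) '' A))) - f xb := by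
      calc (0:EReal) = ((r : EReal) - (r : EReal)) := by
            rw [← EReal.coe_sub]; norm_num
        _ ≤ _ := EReal.sub_le_sub (hr ▸ hS) hr.le
    rcases eq_or_lt_of_le h1 with he | hpos
    · rw [← he, zero_mul]
    rcases eq_or_lt_of_le h2 with he2 | hpos2
    · rw [← he2, mul_zero]
    · exact (EReal.mul_pos hpos hpos2).le
  obtain ⟨t, ht0, ht1, hS⟩ := key
  obtain ⟨y, hy, hylt⟩ := sInf_lt_iff.1 hS
  obtain ⟨z, hz, rfl⟩ := hy
  obtain ⟨w, hw, rfl⟩ := hz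
  obtain ⟨v, hv, rfl⟩ := hw
  -- build a strictly larger element, contradicting maximality
  have hstep : R (bb, xb) (bb + t, xb + t • (v - a)) := by
    refine Or.inr ⟨?_, ?_, ⟨v, hv, ?_⟩, hylt⟩
    · show bb < bb + t
      linarith
    · show bb + t ≤ 1
      linarith
    · show xb + t • (v - a) - xb = (bb + t - bb) • (v - a)
      rw [add_sub_cancel_left, add_sub_cancel_left]
  have hq : R (0, a) (bb + t, xb + t • (v - a)) := prRel_trans hAconv hbase hstep
  have hback := hm ⟨(bb + t, xb + t • (v - a)), hq⟩ hstep
  rcases hback with heq | ⟨hlt, _, _, _⟩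
  · injection heq with h1 h2
    linarith
  · have h2 : bb + t < bb := hlt
    linarith
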